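/- Let m : ℝⁿ → (0,∞) and suppose there exist constants C₀ ≥ 1 and d₀ > 0 such that m(y) ≤ C₀ (1 + |x-y| m(x))^{d₀} m(x) for all x, y ∈ ℝⁿ, and moreover m(y) is comparable to m(x) (with constant C₀) whenever |x-y| ≤ C₀/m(x). Then for all x, y ∈ ℝⁿ, m(y) ≥ m(x) / ( C₀' (1 + |x-y| m(x))^{d₀/(d₀+1)} ) for some constant C₀' depending only on C₀, d₀. -/

import Mathlib

open Metric

theorem aux_function_lower_bound {n : ℕ} (C₀ d₀ : ℝ) (hC₀ : 1 ≤ C₀) (hd₀ : 0 < d₀)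
    (m : EuclideanSpace ℝ (Fin n) → ℝ) (hm : ∀ x, 0 < m x)
    (hb : ∀ x y, m y ≤ C₀ * (1 + ‖x - y‖ * m x) ^ d₀ * m x)
    (hcomp : ∀ x y, ‖x - y‖ ≤ C₀ / m x → m x ≤ C₀ * m y ∧ m y ≤ C₀ * m x) :
    ∃ C₀' : ℝ, 0 < C₀' ∧ ∀ x y,
      m x / (C₀' * (1 + ‖x - y‖ * m x) ^ (d₀ / (d₀ + 1))) ≤ m y := by
  have h2 : (1:ℝ) ≤ (2:ℝ) ^ d₀ := Real.one_le_rpow (by norm_num) hd₀.le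
  refine ⟨C₀ * 2 ^ d₀, by positivity, fun x y => ?_⟩
  set C' := C₀ * 2 ^ d₀ with hC'
  have hC'1 : (1:ℝ) ≤ C' := by nlinarith
  set t := ‖x - y‖ with ht
  set a := m x with ha
  set b := m y with hbb
  have hapos := hm x
  have hbpos := hm y
  have ht0 : 0 ≤ t := norm_nonneg _
  set e := d₀ / (d₀ + 1) with he
  have he0 : 0 ≤ e := by positivity
  have hpow1 : (1:ℝ) ≤ (1 + t * a) ^ e :=
    Real.one_le_rpow (by nlinarith) he0
  have hden : (0:ℝ) < C' * (1 + t * a) ^ e := by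
    have : (0:ℝ) < (1 + t * a) ^ e := lt_of_lt_of_le one_pos hpow1
    positivity
  rw [div_le_iff₀ hden]
  by_cases hcase : t ≤ C₀ / b
  · -- close: use hcomp with roles swapped
    have h := (hcomp y x (by rw [norm_sub_rev]; exact hcase)).2
    calc a ≤ C₀ * b := h
      _ ≤ (C' * (1 + t * a) ^ e) * b := by
          apply mul_le_mul_of_nonneg_right _ hbpos.le
          calc C₀ = C₀ * 1 * 1 := by ring
            _ ≤ C₀ * 2 ^ d₀ * (1 + t * a) ^ e := by
                apply mul_le_mul _ hpow1 zero_le_one (by positivity)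
                exact mul_le_mul_of_nonneg_left h2 (by linarith)
      _ = b * (C' * (1 + t * a) ^ e) := by ring
  · push_neg at hcase
    have htb : 1 < t * b := by
      have : C₀ < t * b := by
        rw [div_lt_iff₀ hbpos] at hcase; linarith
      linarith
    have ht0' : 0 < t := by nlinarith
    -- from hb y x : a ≤ C₀ * (1 + t*b)^d₀ * b
    have h1 : a ≤ C' * t ^ d₀ * b ^ (d₀ + 1) := by
      have h := hb y x
      rw [norm_sub_rev, ← ha, ← hbb, ← ht] at h
      have hmono : (1 + t * b) ^ d₀ ≤ (2 * (t * b)) ^ d₀ :=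
        Real.rpow_le_rpow (by linarith) (by linarith) hd₀.le
      have hx : (2 * (t * b)) ^ d₀ = 2 ^ d₀ * (t ^ d₀ * b ^ d₀) := by
        rw [Real.mul_rpow (by norm_num) (by positivity),
            Real.mul_rpow ht0'.le hbpos.le]
      have hb1 : b ^ (d₀ + 1) = b ^ d₀ * b := by
        rw [Real.rpow_add hbpos, Real.rpow_one]
      calc a ≤ C₀ * (1 + t * b) ^ d₀ * b := h
        _ ≤ C₀ * (2 * (t * b)) ^ d₀ * b := by
            apply mul_le_mul_of_nonneg_right _ hbpos.le
            exact mul_le_mul_of_nonneg_left hmono (by linarith)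
        _ = C' * t ^ d₀ * b ^ (d₀ + 1) := by rw [hx, hb1]; ring
    have h2' : a ≤ (C' * t ^ e * b) ^ (d₀ + 1) := by
      have hexp : e * (d₀ + 1) = d₀ := by
        rw [he, div_mul_cancel₀ _ (ne_of_gt (by linarith : (0:ℝ) < d₀ + 1))]
      have hX : (C' * t ^ e * b) ^ (d₀ + 1)
          = C' ^ (d₀ + 1) * t ^ d₀ * b ^ (d₀ + 1) := by
        rw [Real.mul_rpow (by positivity) hbpos.le,
            Real.mul_rpow (by positivity) (by positivity),
            ← Real.rpow_mul ht0'.le, hexp]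
      have hC'pow : C' ≤ C' ^ (d₀ + 1) := by
        calc C' = C' ^ (1:ℝ) := (Real.rpow_one C').symm
          _ ≤ C' ^ (d₀ + 1) := Real.rpow_le_rpow_of_exponent_le hC'1 (by linarith)
      calc a ≤ C' * t ^ d₀ * b ^ (d₀ + 1) := h1
        _ ≤ C' ^ (d₀ + 1) * t ^ d₀ * b ^ (d₀ + 1) := by
            apply mul_le_mul_of_nonneg_right _ (by positivity)
            exact mul_le_mul_of_nonneg_right hC'pow (by positivity)
        _ = (C' * t ^ e * b) ^ (d₀ + 1) := hX.symm
    -- take (d₀+1)-th root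
    have hroot : a ^ ((d₀ + 1)⁻¹) ≤ C' * t ^ e * b := by
      have := Real.rpow_le_rpow hapos.le h2' (by positivity : (0:ℝ) ≤ (d₀+1)⁻¹)
      rwa [← Real.rpow_mul (by positivity), mul_inv_cancel₀ (by positivity),
        Real.rpow_one] at this
    have hsplit : a = a ^ ((d₀ + 1)⁻¹) * a ^ e := by
      rw [← Real.rpow_add hapos]
      have : (d₀ + 1)⁻¹ + e = 1 := by rw [he]; field_simp; ring
      rw [this, Real.rpow_one]
    have hta : t ^ e * a ^ e ≤ (1 + t * a) ^ e := by
      rw [← Real.mul_rpow ht0'.le hapos.le]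
      exact Real.rpow_le_rpow (by positivity) (by linarith) he0
    calc a = a ^ ((d₀ + 1)⁻¹) * a ^ e := hsplit
      _ ≤ (C' * t ^ e * b) * a ^ e :=
          mul_le_mul_of_nonneg_right hroot (by positivity)
      _ = (C' * (t ^ e * a ^ e)) * b := by ring
      _ ≤ (C' * (1 + t * a) ^ e) * b := by
          apply mul_le_mul_of_nonneg_right _ hbpos.le
          exact mul_le_mul_of_nonneg_left hta (by positivity)
      _ = b * (C' * (1 + t * a) ^ e) := by ring
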